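/- arXiv:1605.02787 — 3 statements merged into one kernel-verified Lean document; each statement's English description precedes it below -/
import Mathlib

section
/- Let g₁,…,g_m ∈ ℝ[x₁,…,x_n] be polynomials with m ≤ n, let ζ ∈ ℝⁿ be a common zero of g₁,…,g_m such that the gradients ∇g₁(ζ),…,∇g_m(ζ) are linearly independent, let d be an integer with d ≥ deg g_i for all i, and let ε > 0. Then there exists δ > 0 such that: whenever f₁,…,f_m ∈ ℝ[x₁,…,x_n] have degree at most d and every coefficient of f_i − g_i has absolute value less than δ (for each i), there exists ξ ∈ ℝⁿ such that (a) f₁(ξ) = ⋯ = f_m(ξ) = 0; (b) ∇f₁(ξ),…,∇f_m(ξ) are linearly independent; and (c) ‖ξ − ζ‖ < ε, where ‖·‖ is the Euclidean norm on ℝⁿ. -/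
open MvPolynomial Matrix

/-- The gradient of a multivariate polynomial with rational coefficients,
evaluated at a point with coordinates in a `ℚ`-algebra `K`. -/
noncomputable def grad {K : Type} [CommRing K] [Algebra ℚ K] {m : ℕ}
    (F : MvPolynomial (Fin m) ℚ) (v : Fin m → K) : Fin m → K :=
  fun i => MvPolynomial.aeval v (MvPolynomial.pderiv i F)

/-- `F` is a nonzero cubic form defining a smooth cubic hypersurface. -/
def SmoothCubic {m : ℕ} (F : MvPolynomial (Fin m) ℚ) : Prop :=
  F ≠ 0 ∧ F.IsHomogeneous 3 ∧
    ∀ v : Fin m → ℂ, v ≠ 0 → MvPolynomial.aeval v F = 0 → grad F v ≠ 0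

/-- The set of `K`-points of the hypersurface `X : F = 0`. -/
def XPts (K : Type) [Field K] [Algebra ℚ K] {m : ℕ} (F : MvPolynomial (Fin m) ℚ) :
    Set (Projectivization K (Fin m → K)) :=
  {P | MvPolynomial.aeval P.rep F = 0}

/-- `ℓ · X = P + Q + R` for some line `ℓ` over `K` not contained in `X`:
the restriction of `F` to a linear parametrization of the line spanned by `u, w`
is a nonzero binary cubic whose roots (with multiplicity) correspond to `P, Q, R`. -/
def LineEq {K : Type} [Field K] [Algebra ℚ K] {m : ℕ}
    (F : MvPolynomial (Fin m) ℚ)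
    (P Q R : Projectivization K (Fin m → K)) : Prop :=
  ∃ (u w : Fin m → K) (aP bP aQ bQ aR bR c : K)
    (hP : aP • u + bP • w ≠ 0) (hQ : aQ • u + bQ • w ≠ 0) (hR : aR • u + bR • w ≠ 0),
      LinearIndependent K ![u, w] ∧ c ≠ 0 ∧
      P = Projectivization.mk K (aP • u + bP • w) hP ∧
      Q = Projectivization.mk K (aQ • u + bQ • w) hQ ∧
      R = Projectivization.mk K (aR • u + bR • w) hR ∧
      ∀ s t : K, MvPolynomial.aeval (s • u + t • w) F =
        c * (bP * s - aP * t) * (bQ * s - aQ * t) * (bR * s - aR * t)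

/-- The span of `S ⊆ X(ℚ)` under secant and tangent constructions: the smallest
subset of `X(ℚ)` containing `S` and closed under taking the third point of
intersection of a rational line with `X`. -/
def SpanSet {m : ℕ} (F : MvPolynomial (Fin m) ℚ)
    (S : Set (Projectivization ℚ (Fin m → ℚ))) : Set (Projectivization ℚ (Fin m → ℚ)) :=
  ⋂₀ {T | S ⊆ T ∧ T ⊆ XPts ℚ F ∧
        ∀ P Q R, LineEq F P Q R → P ∈ T → Q ∈ T → R ∈ T}

/-- The quotient topology on real projective space. -/
instance projectivizationTopology (m : ℕ) :
    TopologicalSpace (Projectivization ℝ (Fin m → ℝ)) :=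
  inferInstanceAs (TopologicalSpace (Quotient (projectivizationSetoid ℝ (Fin m → ℝ))))

/-- `U` is an open subset of `X(ℝ)` in the subspace topology. -/
def IsOpenInX {m : ℕ} (F : MvPolynomial (Fin m) ℚ)
    (U : Set (Projectivization ℝ (Fin m → ℝ))) : Prop :=
  ∃ O : Set (Projectivization ℝ (Fin m → ℝ)), IsOpen O ∧ U = O ∩ XPts ℝ F

/-- The real projective point associated to a rational projective point. -/
noncomputable def ratToReal {m : ℕ} (P : Projectivization ℚ (Fin m → ℚ)) :
    Projectivization ℝ (Fin m → ℝ) :=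
  Projectivization.mk ℝ (fun i => (P.rep i : ℝ)) (by
    intro h
    apply Projectivization.rep_nonzero P
    funext i
    have hi : ((P.rep i : ℝ)) = 0 := congrFun h i
    exact_mod_cast hi)

/-- The Hessian matrix of `F` at `v`. -/
noncomputable def hessAt {K : Type} [CommRing K] [Algebra ℚ K] {m : ℕ}
    (F : MvPolynomial (Fin m) ℚ) (v : Fin m → K) : Matrix (Fin m) (Fin m) K :=
  Matrix.of fun i j => MvPolynomial.aeval v (MvPolynomial.pderiv i (MvPolynomial.pderiv j F))

/-- `c` is (a lift of) a smooth real point of `Y_{B,D}`, where `b, d` are lifts of `B, D`: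
`c` is a nonzero common zero of the three forms defining `Y_{B,D}` at which their
gradients are linearly independent. -/
def YSmoothPt {m : ℕ} (F : MvPolynomial (Fin m) ℚ) (b d c : Fin m → ℝ) : Prop :=
  c ≠ 0 ∧ MvPolynomial.aeval c F = 0 ∧ grad F c ⬝ᵥ d = 0 ∧ grad F b ⬝ᵥ c = 0 ∧
    LinearIndependent ℝ ![grad F c, Matrix.vecMul d (hessAt F c), grad F b]

/-- The tangent space `T̂_P = {v : ∇F(lift of P)·v = 0}` at the vector level. -/
def tangentVecs {m : ℕ} (F : MvPolynomial (Fin m) ℚ) (v : Fin m → ℝ) : Set (Fin m → ℝ) :=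
  {w | grad F v ⬝ᵥ w = 0}

/-- The second fundamental form (as a quadratic form on `T̂_P`). -/
noncomputable def sff {m : ℕ} (F : MvPolynomial (Fin m) ℚ) (v w : Fin m → ℝ) : ℝ :=
  w ⬝ᵥ Matrix.mulVec (hessAt F v) w

/-- The second fundamental form at `P` has full rank: the radical of the restriction of
the Hessian form to `T̂_P` is exactly the line `ℝ·v_P`. -/
def SFFFullRank {m : ℕ} (F : MvPolynomial (Fin m) ℚ)
    (P : Projectivization ℝ (Fin m → ℝ)) : Prop :=
  {v | v ∈ tangentVecs F P.rep ∧
      ∀ w ∈ tangentVecs F P.rep, v ⬝ᵥ Matrix.mulVec (hessAt F P.rep) w = 0}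
    = {v | ∃ c : ℝ, v = c • P.rep}

/-- The second fundamental form at `P` is definite. -/
def SFFDefinite {m : ℕ} (F : MvPolynomial (Fin m) ℚ)
    (P : Projectivization ℝ (Fin m → ℝ)) : Prop :=
  ((∀ v ∈ tangentVecs F P.rep, 0 ≤ sff F P.rep v) ∨
   (∀ v ∈ tangentVecs F P.rep, sff F P.rep v ≤ 0)) ∧
  ∀ v ∈ tangentVecs F P.rep, sff F P.rep v = 0 → ∃ c : ℝ, v = c • P.rep

/-- The second fundamental form at `P` is indefinite. -/
def SFFIndefinite {m : ℕ} (F : MvPolynomial (Fin m) ℚ)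
    (P : Projectivization ℝ (Fin m → ℝ)) : Prop :=
  (∃ v ∈ tangentVecs F P.rep, 0 < sff F P.rep v) ∧
  (∃ v ∈ tangentVecs F P.rep, sff F P.rep v < 0)

/-- `p` is (a complex lift of) an Eckardt point of `X`: `X_p` is a cone with vertex `p`,
i.e. for every point `q` of `X_p` not equal to `p`, the line through `p` and `q`
is contained in `X_p`. -/
def IsEckardt {m : ℕ} (F : MvPolynomial (Fin m) ℚ) (p : Fin m → ℂ) : Prop :=
  ∀ q : Fin m → ℂ, q ≠ 0 → MvPolynomial.aeval q F = 0 → grad F p ⬝ᵥ q = 0 →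
    (¬ ∃ c : ℂ, q = c • p) →
    ∀ s t : ℂ, MvPolynomial.aeval (s • p + t • q) F = 0 ∧
      grad F p ⬝ᵥ (s • p + t • q) = 0

section StabilityAux
open Filter Topology

section Aux
variable {n : ℕ}

/-- Strict derivative of evaluation of a multivariate polynomial. -/
lemma hasStrictFDerivAt_mveval (p : MvPolynomial (Fin n) ℝ) (x : Fin n → ℝ) :
    HasStrictFDerivAt (fun y : Fin n → ℝ => eval y p)
      (∑ j, eval x (pderiv j p) • ContinuousLinearMap.proj (R := ℝ) (φ := fun _ : Fin n => ℝ) j) x := by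
  induction p using MvPolynomial.induction_on with
  | C a =>
      simp only [eval_C, pderiv_C, map_zero, zero_smul, Finset.sum_const_zero]
      exact hasStrictFDerivAt_const a x
  | add p q hp hq =>
      have := hp.add hq
      simp only [eval_add, map_add, add_smul, Finset.sum_add_distrib] at this ⊢
      exact this
  | mul_X p i hp =>
      have hproj : HasStrictFDerivAt (fun y : Fin n → ℝ => y i)
          (ContinuousLinearMap.proj (R := ℝ) (φ := fun _ : Fin n => ℝ) i) x :=
        (ContinuousLinearMap.proj (R := ℝ) (φ := fun _ : Fin n => ℝ) i).hasStrictFDerivAt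
      have hmul := hp.mul hproj
      have hfun : (fun y : Fin n → ℝ => eval y (p * X i)) = fun y => eval y p * y i := by
        funext y; simp [eval_mul]
      have heq : (∑ j, eval x (pderiv j (p * X i)) • ContinuousLinearMap.proj (R := ℝ) (φ := fun _ : Fin n => ℝ) j)
          = eval x p • ContinuousLinearMap.proj i
            + x i • ∑ j, eval x (pderiv j p) • ContinuousLinearMap.proj (R := ℝ) (φ := fun _ : Fin n => ℝ) j := by
        have hterm : ∀ j : Fin n,
            eval x (pderiv j (p * X i)) • ContinuousLinearMap.proj (R := ℝ) (φ := fun _ : Fin n => ℝ) j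
            = (x i * eval x (pderiv j p)) • ContinuousLinearMap.proj (R := ℝ) (φ := fun _ : Fin n => ℝ) j
              + (if j = i then eval x p • ContinuousLinearMap.proj (R := ℝ) (φ := fun _ : Fin n => ℝ) j else 0) := by
          intro j
          by_cases h : j = i
          · subst h
            rw [if_pos rfl, ← add_smul]
            congr 1
            rw [pderiv_mul, pderiv_X_self]
            simp [mul_comm]
          · rw [if_neg h, add_zero]
            congr 1
            rw [pderiv_mul, pderiv_X]
            simp [Pi.single_apply, h, mul_comm]
        simp only [hterm, Finset.sum_add_distrib]
        rw [Finset.sum_ite_eq' Finset.univ i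
          (fun j => eval x p • ContinuousLinearMap.proj (R := ℝ) (φ := fun _ : Fin n => ℝ) j)]
        simp only [Finset.mem_univ, if_true]
        rw [add_comm]
        congr 1
        rw [Finset.smul_sum]
        exact Finset.sum_congr rfl fun j _ => (smul_smul _ _ _).symm
      rw [hfun, heq]
      exact hmul

/-- Expressing a linear functional of a polynomial via coefficients on a superset of support. -/
lemma sum_coeff_eq (p : MvPolynomial (Fin n) ℝ) {S : Finset ((Fin n) →₀ ℕ)} (hS : p.support ⊆ S)
    (T : MvPolynomial (Fin n) ℝ →ₗ[ℝ] ℝ) :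
    T p = ∑ s ∈ S, coeff s p * T (monomial s 1) := by
  have h1 : ∑ s ∈ S, coeff s p * T (monomial s 1)
      = ∑ s ∈ p.support, coeff s p * T (monomial s 1) :=
    (Finset.sum_subset hS (fun s _ hs => by
      rw [MvPolynomial.notMem_support_iff.mp hs, zero_mul])).symm
  rw [h1]
  conv_lhs => rw [p.as_sum]
  rw [map_sum]
  exact Finset.sum_congr rfl fun s _ => by
    rw [← smul_eq_mul, ← _root_.map_smul, smul_monomial, smul_eq_mul, mul_one]

end Aux

lemma mulVec_surjective_of_rows_li {m n : ℕ} (M : Matrix (Fin m) (Fin n) ℝ)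
    (h : LinearIndependent ℝ (fun i => M i)) : Function.Surjective M.mulVec := by
  have hinj : Function.Injective fun v => Matrix.vecMul v M :=
    Matrix.vecMul_injective_iff.mpr h
  set B : Matrix (Fin m) (Fin m) ℝ := M * Mᵀ with hB
  have hBinj : Function.Injective fun v => Matrix.vecMul v B := by
    intro y z hyz
    apply hinj
    have h0 : Matrix.vecMul (y - z) B = 0 := by
      have := sub_eq_zero.mpr hyz
      simpa [Matrix.sub_vecMul] using this
    have h1 : Matrix.vecMul (y - z) M ⬝ᵥ Matrix.vecMul (y - z) M = 0 := by
      have h2 : Matrix.vecMul (y - z) B = Matrix.vecMul (Matrix.vecMul (y - z) M) Mᵀ := by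
        rw [hB, Matrix.vecMul_vecMul]
      rw [h2, Matrix.vecMul_transpose] at h0
      calc Matrix.vecMul (y - z) M ⬝ᵥ Matrix.vecMul (y - z) M
          = (y - z) ⬝ᵥ M.mulVec (Matrix.vecMul (y - z) M) := by
            rw [Matrix.dotProduct_mulVec]
        _ = 0 := by rw [h0, dotProduct_zero]
    have h3 : Matrix.vecMul (y - z) M = 0 := by
      ext j
      have := dotProduct_self_eq_zero.mp h1
      exact congrFun this j
    rw [Matrix.sub_vecMul] at h3
    simpa using sub_eq_zero.mp h3
  have hBunit : IsUnit B := Matrix.vecMul_injective_iff_isUnit.mp hBinj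
  intro b
  refine ⟨Mᵀ.mulVec (B⁻¹.mulVec b), ?_⟩
  rw [Matrix.mulVec_mulVec, ← hB, Matrix.mulVec_mulVec, Matrix.mul_nonsing_inv _
    ((Matrix.isUnit_iff_isUnit_det B).mp hBunit), Matrix.one_mulVec]

section Aux3
variable (n m d : ℕ)

/-- Monomials of degree at most `d`. -/
noncomputable def MSet : Finset ((Fin n) →₀ ℕ) :=
  Finset.filter (fun s => (s.sum fun _ e => e) ≤ d)
    (Finset.Iic (Finsupp.equivFunOnFinite.symm fun _ : Fin n => d))

lemma support_subset_SSet (p : MvPolynomial (Fin n) ℝ) (hp : p.totalDegree ≤ d) :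
    p.support ⊆ MSet n d := by
  intro s hs
  have hdeg : (s.sum fun _ e => e) ≤ d := (MvPolynomial.le_totalDegree hs).trans hp
  refine Finset.mem_filter.mpr ⟨Finset.mem_Iic.mpr ?_, hdeg⟩
  intro i
  have h1 : s i ≤ ∑ j, s j :=
    Finset.single_le_sum (f := fun j => s j) (fun j _ => Nat.zero_le _) (Finset.mem_univ i)
  have h2 : (s.sum fun _ e => e) = ∑ j, s j :=
    Finsupp.sum_fintype _ _ (fun _ => rfl)
  simpa using (h1.trans (h2 ▸ hdeg))

/-- The coefficient space. -/
abbrev Ety := Fin m → (↥(MSet n d) → ℝ)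

/-- Evaluation of the generic degree-`≤ d` system. -/
noncomputable def Psi : (Ety n m d) × (Fin n → ℝ) → (Fin m → ℝ) :=
  fun p i => ∑ s : ↥(MSet n d), p.1 i s * eval p.2 (monomial s.1 1)

/-- Evaluation as a linear map. -/
noncomputable def evalLM (x : Fin n → ℝ) : MvPolynomial (Fin n) ℝ →ₗ[ℝ] ℝ where
  toFun := fun p => eval x p
  map_add' := by simp
  map_smul' := by simp [smul_eval]

lemma Psi_eq (c : Ety n m d) (x : Fin n → ℝ) (i : Fin m) (p : MvPolynomial (Fin n) ℝ)
    (hp : p.totalDegree ≤ d) (hc : ∀ s : ↥(MSet n d), c i s = coeff s.1 p) :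
    Psi n m d (c, x) i = eval x p := by
  rw [show eval x p = evalLM n x p from rfl,
    sum_coeff_eq p (support_subset_SSet n d p hp) (evalLM n x)]
  rw [Psi, ← Finset.sum_coe_sort (MSet n d) (fun s => coeff s p * evalLM n x (monomial s 1))]
  exact Finset.sum_congr rfl fun s _ => by
    show c i s * _ = _; rw [hc s]; rfl

lemma grad_eq (c : Ety n m d) (x : Fin n → ℝ) (i : Fin m) (j : Fin n)
    (p : MvPolynomial (Fin n) ℝ)
    (hp : p.totalDegree ≤ d) (hc : ∀ s : ↥(MSet n d), c i s = coeff s.1 p) :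
    (∑ s : ↥(MSet n d), c i s * eval x (pderiv j (monomial s.1 1))) = eval x (pderiv j p) := by
  have := sum_coeff_eq p (support_subset_SSet n d p hp)
    ((evalLM n x).comp (pderiv j).toLinearMap)
  rw [show eval x (pderiv j p) = ((evalLM n x).comp (pderiv j).toLinearMap) p from rfl, this,
    ← Finset.sum_coe_sort (MSet n d)
      (fun s => coeff s p * ((evalLM n x).comp (pderiv j).toLinearMap) (monomial s 1))]
  exact Finset.sum_congr rfl fun s _ => by rw [hc s]; rfl

/-- The derivative of `Psi` at `(cg, ζ)`. -/
noncomputable def PsiD (cg : Ety n m d) (z : Fin n → ℝ) :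
    ((Ety n m d) × (Fin n → ℝ)) →L[ℝ] (Fin m → ℝ) :=
  ContinuousLinearMap.pi fun i => ∑ s : ↥(MSet n d),
    ((cg i s) • ((∑ j, eval z (pderiv j (monomial s.1 1)) •
          ContinuousLinearMap.proj (R := ℝ) (φ := fun _ : Fin n => ℝ) j).comp
        (ContinuousLinearMap.snd ℝ (Ety n m d) (Fin n → ℝ)))
      + (eval z (monomial s.1 1)) •
        (((ContinuousLinearMap.proj (R := ℝ) (φ := fun _ : ↥(MSet n d) => ℝ) s).comp
            (ContinuousLinearMap.proj (R := ℝ) (φ := fun _ : Fin m => ↥(MSet n d) → ℝ) i)).comp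
          (ContinuousLinearMap.fst ℝ (Ety n m d) (Fin n → ℝ))))

lemma hasStrictFDerivAt_Psi (cg : Ety n m d) (z : Fin n → ℝ) :
    HasStrictFDerivAt (Psi n m d) (PsiD n m d cg z) (cg, z) := by
  apply hasStrictFDerivAt_pi'.mpr
  intro i
  rw [PsiD, ContinuousLinearMap.proj_pi]
  apply HasStrictFDerivAt.fun_sum
  intro s _
  have hc : HasStrictFDerivAt (fun p : (Ety n m d) × (Fin n → ℝ) => p.1 i s)
      (((ContinuousLinearMap.proj (R := ℝ) (φ := fun _ : ↥(MSet n d) => ℝ) s).comp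
          (ContinuousLinearMap.proj (R := ℝ) (φ := fun _ : Fin m => ↥(MSet n d) → ℝ) i)).comp
        (ContinuousLinearMap.fst ℝ (Ety n m d) (Fin n → ℝ))) (cg, z) :=
    (((ContinuousLinearMap.proj (R := ℝ) (φ := fun _ : ↥(MSet n d) => ℝ) s).comp
          (ContinuousLinearMap.proj (R := ℝ) (φ := fun _ : Fin m => ↥(MSet n d) → ℝ) i)).comp
        (ContinuousLinearMap.fst ℝ (Ety n m d) (Fin n → ℝ))).hasStrictFDerivAt
  have hd : HasStrictFDerivAt (fun p : (Ety n m d) × (Fin n → ℝ) => eval p.2 (monomial s.1 1))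
      ((∑ j, eval z (pderiv j (monomial s.1 1)) •
          ContinuousLinearMap.proj (R := ℝ) (φ := fun _ : Fin n => ℝ) j).comp
        (ContinuousLinearMap.snd ℝ (Ety n m d) (Fin n → ℝ))) (cg, z) :=
    (hasStrictFDerivAt_mveval (monomial s.1 1) z).comp (cg, z)
      ((ContinuousLinearMap.snd ℝ (Ety n m d) (Fin n → ℝ)).hasStrictFDerivAt)
  exact hc.mul hd

end Aux3

section Aux4
variable (n m d : ℕ)

/-- The full map `(c, x) ↦ (c, Ψ(c,x))`. -/
noncomputable def Gmap : (Ety n m d) × (Fin n → ℝ) → (Ety n m d) × (Fin m → ℝ) :=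
  fun p => (p.1, Psi n m d p)

/-- Its derivative at `(cg, z)`. -/
noncomputable def GD (cg : Ety n m d) (z : Fin n → ℝ) :
    ((Ety n m d) × (Fin n → ℝ)) →L[ℝ] (Ety n m d) × (Fin m → ℝ) :=
  (ContinuousLinearMap.fst ℝ (Ety n m d) (Fin n → ℝ)).prod (PsiD n m d cg z)

lemma hasStrictFDerivAt_Gmap (cg : Ety n m d) (z : Fin n → ℝ) :
    HasStrictFDerivAt (Gmap n m d) (GD n m d cg z) (cg, z) :=
  HasStrictFDerivAt.prodMk ((ContinuousLinearMap.fst ℝ (Ety n m d) (Fin n → ℝ)).hasStrictFDerivAt)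
    (hasStrictFDerivAt_Psi n m d cg z)

lemma PsiD_apply (cg : Ety n m d) (z : Fin n → ℝ) (a : Ety n m d) (b : Fin n → ℝ) (i : Fin m) :
    PsiD n m d cg z (a, b) i
      = ∑ s : ↥(MSet n d), (cg i s * ∑ j, eval z (pderiv j (monomial s.1 1)) * b j
          + eval z (monomial s.1 1) * a i s) := by
  simp [PsiD, ContinuousLinearMap.sum_apply, ContinuousLinearMap.proj_apply,
    ContinuousLinearMap.smul_apply, ContinuousLinearMap.comp_apply,
    ContinuousLinearMap.coe_fst', ContinuousLinearMap.coe_snd',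
    smul_eq_mul, mul_comm]

lemma range_GD (cg : Ety n m d) (z : Fin n → ℝ) (M : Matrix (Fin m) (Fin n) ℝ)
    (hM : ∀ i j, (∑ s : ↥(MSet n d), cg i s * eval z (pderiv j (monomial s.1 1))) = M i j)
    (hli : LinearIndependent ℝ (fun i => M i)) :
    (GD n m d cg z).range = ⊤ := by
  rw [LinearMap.range_eq_top]
  intro y
  obtain ⟨δx, hδx⟩ := mulVec_surjective_of_rows_li M hli
    (y.2 - PsiD n m d cg z (y.1, 0))
  refine ⟨(y.1, δx), ?_⟩
  have h0 : PsiD n m d cg z (0, δx) = M.mulVec δx := by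
    funext i
    rw [PsiD_apply]
    simp only [Pi.zero_apply, mul_zero, add_zero]
    rw [Matrix.mulVec, dotProduct]
    calc ∑ s : ↥(MSet n d), cg i s * ∑ j, eval z (pderiv j (monomial s.1 1)) * δx j
        = ∑ s : ↥(MSet n d), ∑ j, cg i s * (eval z (pderiv j (monomial s.1 1)) * δx j) :=
          Finset.sum_congr rfl fun s _ => Finset.mul_sum _ _ _
      _ = ∑ j, ∑ s : ↥(MSet n d), cg i s * (eval z (pderiv j (monomial s.1 1)) * δx j) :=
          Finset.sum_comm
      _ = ∑ j, M i j * δx j := Finset.sum_congr rfl fun j _ => by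
          rw [← hM i j, Finset.sum_mul]
          exact Finset.sum_congr rfl fun s _ => by ring
  have hadd : PsiD n m d cg z (y.1, δx)
      = PsiD n m d cg z (y.1, 0) + PsiD n m d cg z (0, δx) := by
    rw [← map_add]
    congr 1
    simp
  have : GD n m d cg z (y.1, δx) = (y.1, PsiD n m d cg z (y.1, δx)) := rfl
  change GD n m d cg z (y.1, δx) = y
  rw [this, hadd, h0, hδx]
  simp

/-- The gradient matrix of the generic system. -/
noncomputable def Gam : (Ety n m d) × (Fin n → ℝ) → (Fin m → Fin n → ℝ) :=
  fun p i j => ∑ s : ↥(MSet n d), p.1 i s * eval p.2 (pderiv j (monomial s.1 1))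

lemma continuous_Gam : Continuous (Gam n m d) := by
  apply continuous_pi; intro i; apply continuous_pi; intro j
  apply continuous_finset_sum
  intro s _
  have h1 : Continuous fun p : (Ety n m d) × (Fin n → ℝ) => p.1 i s :=
    (continuous_apply s).comp ((continuous_apply i).comp continuous_fst)
  have h2 : Continuous fun x : Fin n → ℝ => eval x (pderiv j (monomial s.1 1)) :=
    continuous_iff_continuousAt.mpr fun x => (hasStrictFDerivAt_mveval _ x).continuousAt
  exact h1.mul (h2.comp continuous_snd)

end Aux4


/-- numerical stability of a nondegenerate common zero of a system
of real polynomials under small perturbations of the coefficients. -/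
theorem statement3 (n m : ℕ) (hm : m ≤ n)
    (g : Fin m → MvPolynomial (Fin n) ℝ)
    (ζ : Fin n → ℝ) (hζ : ∀ i, MvPolynomial.eval ζ (g i) = 0)
    (hind : LinearIndependent ℝ
      (fun i : Fin m => fun j : Fin n => MvPolynomial.eval ζ (MvPolynomial.pderiv j (g i))))
    (d : ℕ) (hd : ∀ i, (g i).totalDegree ≤ d)
    (ε : ℝ) (hε : 0 < ε) :
    ∃ δ > 0, ∀ f : Fin m → MvPolynomial (Fin n) ℝ,
      (∀ i, (f i).totalDegree ≤ d) →
      (∀ (i : Fin m) (s : (Fin n) →₀ ℕ), |MvPolynomial.coeff s (f i - g i)| < δ) →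
      ∃ ξ : Fin n → ℝ,
        (∀ i, MvPolynomial.eval ξ (f i) = 0) ∧
        LinearIndependent ℝ
          (fun i : Fin m => fun j : Fin n => MvPolynomial.eval ξ (MvPolynomial.pderiv j (f i))) ∧
        Real.sqrt (∑ j, (ξ j - ζ j) ^ 2) < ε := by
  classical
  set cg : Ety n m d := fun i s => coeff s.1 (g i) with hcg
  have hG := hasStrictFDerivAt_Gmap n m d cg ζ
  have hsurj : (GD n m d cg ζ).range = ⊤ := by
    refine range_GD n m d cg ζ
      (Matrix.of fun i j => eval ζ (pderiv j (g i)))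
      (fun i j => grad_eq n m d cg ζ i j (g i) (hd i) (fun s => rfl)) ?_
    exact hind
  have hGa : Gmap n m d (cg, ζ) = (cg, 0) := by
    have h0 : Psi n m d (cg, ζ) = 0 := funext fun i => by
      rw [Psi_eq n m d cg ζ i (g i) (hd i) (fun s => rfl), hζ i]; rfl
    rw [Gmap, h0]
  set ψ := hG.implicitFunction (Gmap n m d) (GD n m d cg ζ) hsurj with hψ
  -- continuity of the implicit solution
  have htend : Tendsto (fun c : Ety n m d => ψ (c, 0) 0) (𝓝 cg) (𝓝 (cg, ζ)) := by
    apply hG.tendsto_implicitFunction hsurj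
      (g₁ := fun c : Ety n m d => (c, (0 : Fin m → ℝ)))
      (g₂ := fun _ => (0 : (GD n m d cg ζ).ker))
    · rw [hGa]
      exact (continuous_id.prodMk continuous_const).tendsto cg
    · exact tendsto_const_nhds
  -- the implicit solution solves the equation
  have hev : ∀ᶠ c in 𝓝 cg, Gmap n m d (ψ (c, 0) 0) = (c, 0) := by
    have h1 := hG.map_implicitFunction_eq hsurj
    rw [hGa] at h1
    have h2 : Tendsto (fun c : Ety n m d =>
        (((c, (0 : Fin m → ℝ))), (0 : (GD n m d cg ζ).ker))) (𝓝 cg)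
        (𝓝 ((cg, 0), 0)) :=
      ((continuous_id.prodMk continuous_const).prodMk continuous_const).tendsto cg
    exact h2.eventually h1
  -- linear independence is eventually preserved
  have hΓa : Gam n m d (cg, ζ)
      = fun i (j : Fin n) => eval ζ (pderiv j (g i)) :=
    by funext i j; exact grad_eq n m d cg ζ i j (g i) (hd i) (fun s => rfl)
  have hW : IsOpen {p : (Ety n m d) × (Fin n → ℝ) | LinearIndependent ℝ (Gam n m d p)} :=
    isOpen_setOf_linearIndependent.preimage (continuous_Gam n m d)
  have haW : (cg, ζ) ∈ {p : (Ety n m d) × (Fin n → ℝ) | LinearIndependent ℝ (Gam n m d p)} := by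
    show LinearIndependent ℝ (Gam n m d (cg, ζ))
    rw [hΓa]; exact hind
  have h3 : ∀ᶠ c in 𝓝 cg, LinearIndependent ℝ (Gam n m d (ψ (c, 0) 0)) :=
    htend.eventually (hW.eventually_mem haW)
  -- the solution is eventually close to ζ
  have hs1 : (0 : ℝ) < Real.sqrt n + 1 := by positivity
  have hε' : 0 < ε / (Real.sqrt n + 1) := div_pos hε hs1
  have h4 : ∀ᶠ c in 𝓝 cg, dist (ψ (c, 0) 0).2 ζ < ε / (Real.sqrt n + 1) := by
    have ht2 : Tendsto (fun c : Ety n m d => (ψ (c, 0) 0).2) (𝓝 cg) (𝓝 ζ) :=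
      (continuous_snd.tendsto (cg, ζ)).comp htend
    exact Metric.tendsto_nhds.mp ht2 _ hε'
  obtain ⟨δ, hδpos, hδ⟩ := Metric.eventually_nhds_iff.mp ((hev.and h3).and h4)
  refine ⟨δ, hδpos, ?_⟩
  intro f hfd hfc
  set cf : Ety n m d := fun i s => coeff s.1 (f i) with hcf
  have hdist : dist cf cg < δ := by
    rw [dist_pi_lt_iff hδpos]; intro i
    rw [dist_pi_lt_iff hδpos]; intro s
    rw [Real.dist_eq]
    have h := hfc i s.1
    rwa [MvPolynomial.coeff_sub] at h
  obtain ⟨⟨hGeq, hLI⟩, hdist2⟩ := hδ hdist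
  set ξ : Fin n → ℝ := (ψ (cf, 0) 0).2 with hξ
  have hfst : (ψ (cf, 0) 0).1 = cf := congrArg Prod.fst hGeq
  have hz : Psi n m d (ψ (cf, 0) 0) = 0 := congrArg Prod.snd hGeq
  have hpair : ψ (cf, 0) 0 = (cf, ξ) := Prod.ext hfst rfl
  refine ⟨ξ, ?_, ?_, ?_⟩
  · intro i
    have h1 := Psi_eq n m d cf ξ i (f i) (hfd i) (fun s => rfl)
    rw [← h1, ← hpair, hz]
    rfl
  · have h2 : (fun i : Fin m => fun j : Fin n => eval ξ (pderiv j (f i)))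
        = Gam n m d (ψ (cf, 0) 0) := by
      rw [hpair]
      funext i j
      exact (grad_eq n m d cf ξ i j (f i) (hfd i) (fun s => rfl)).symm
    rw [h2]
    exact hLI
  · have hco : ∀ j, |ξ j - ζ j| ≤ ε / (Real.sqrt n + 1) := by
      intro j
      have h := dist_le_pi_dist ξ ζ j
      rw [Real.dist_eq] at h
      exact h.trans hdist2.le
    have hsum : (∑ j, (ξ j - ζ j) ^ 2) ≤ (n : ℝ) * (ε / (Real.sqrt n + 1)) ^ 2 := by
      calc ∑ j, (ξ j - ζ j) ^ 2 ≤ ∑ _j : Fin n, (ε / (Real.sqrt n + 1)) ^ 2 :=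
            Finset.sum_le_sum fun j _ => by
              calc (ξ j - ζ j) ^ 2 = |ξ j - ζ j| ^ 2 := (sq_abs _).symm
                _ ≤ (ε / (Real.sqrt n + 1)) ^ 2 :=
                    pow_le_pow_left₀ (abs_nonneg _) (hco j) 2
        _ = (n : ℝ) * (ε / (Real.sqrt n + 1)) ^ 2 := by
            simp [Finset.sum_const, Finset.card_univ, nsmul_eq_mul]
    have hle : Real.sqrt (∑ j, (ξ j - ζ j) ^ 2)
        ≤ Real.sqrt ((n : ℝ) * (ε / (Real.sqrt n + 1)) ^ 2) := Real.sqrt_le_sqrt hsum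
    have heq : Real.sqrt ((n : ℝ) * (ε / (Real.sqrt n + 1)) ^ 2)
        = Real.sqrt n * (ε / (Real.sqrt n + 1)) := by
      rw [Real.sqrt_mul (Nat.cast_nonneg n), Real.sqrt_sq hε'.le]
    have hlast : Real.sqrt n * (ε / (Real.sqrt n + 1)) < ε := by
      have h1 : Real.sqrt (n : ℝ) / (Real.sqrt n + 1) < 1 :=
        (div_lt_one hs1).mpr (lt_add_one _)
      calc Real.sqrt n * (ε / (Real.sqrt n + 1)) = ε * (Real.sqrt (n:ℝ) / (Real.sqrt n + 1)) := by
            ring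
        _ < ε * 1 := mul_lt_mul_of_pos_left h1 hε
        _ = ε := mul_one ε
    exact lt_of_le_of_lt (hle.trans_eq heq) hlast

end StabilityAux
end

section
/- Let B, D′ ∈ X(ℝ) be such that the variety Y_{B,D′} has a smooth real point C′, and let V ⊆ X(ℝ) be an open neighbourhood of C′. Then there is an open neighbourhood U ⊆ X(ℝ) of D′ such that for every D ∈ U, the variety Y_{B,D} has a smooth real point C ∈ V. -/
open MvPolynomial Matrix

noncomputable def projCLM {m : ℕ} (i : Fin m) : (Fin m → ℝ) →L[ℝ] ℝ :=
  ContinuousLinearMap.proj i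

lemma projCLM_apply {m : ℕ} (i : Fin m) (w : Fin m → ℝ) : projCLM i w = w i := rfl

noncomputable def dotCLM {m : ℕ} (v : Fin m → ℝ) : (Fin m → ℝ) →L[ℝ] ℝ :=
  ∑ i, v i • projCLM i

lemma dotCLM_apply {m : ℕ} (v w : Fin m → ℝ) : dotCLM v w = v ⬝ᵥ w := by
  simp [dotCLM, dotProduct, ContinuousLinearMap.sum_apply, projCLM_apply]

lemma hasStrictFDerivAt_evalR {m : ℕ} (c : Fin m → ℝ) (p : MvPolynomial (Fin m) ℝ) :
    HasStrictFDerivAt (fun v : Fin m → ℝ => eval v p)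
      (dotCLM fun i => eval c (pderiv i p)) c := by
  induction p using MvPolynomial.induction_on with
  | C a =>
      have h0 : (dotCLM fun i : Fin m => eval c (pderiv i (C a : MvPolynomial (Fin m) ℝ))) = 0 := by
        ext w; simp [dotCLM_apply, dotProduct]
      have hfun : (fun v : Fin m → ℝ => eval v (C a : MvPolynomial (Fin m) ℝ)) = fun _ => a := by
        funext v; simp
      rw [h0, hfun]
      exact hasStrictFDerivAt_const a c
  | add p q hp hq =>
      have hfun : (fun v : Fin m → ℝ => eval v (p + q)) = fun v => eval v p + eval v q := by
        funext v; simp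
      have hder : (dotCLM fun i => eval c (pderiv i (p + q)))
          = (dotCLM fun i => eval c (pderiv i p)) + (dotCLM fun i => eval c (pderiv i q)) := by
        ext w
        simp [dotCLM_apply, dotProduct, add_mul, Finset.sum_add_distrib]
      rw [hfun, hder]
      exact hp.add hq
  | mul_X p i hp =>
      have hx : HasStrictFDerivAt (fun v : Fin m → ℝ => v i) (projCLM i) c :=
        (projCLM i).hasStrictFDerivAt
      have h := hp.mul hx
      have hfun : (fun v : Fin m → ℝ => eval v (p * X i)) = fun v => eval v p * v i := by
        funext v; simp
      have hder : (dotCLM fun j => eval c (pderiv j (p * X i)))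
          = eval c p • projCLM i
            + c i • dotCLM (fun j => eval c (pderiv j p)) := by
        ext w
        classical
        have key : ∀ j, eval c (pderiv j (p * X i))
            = eval c (pderiv j p) * c i + (if j = i then eval c p else 0) := by
          intro j
          rw [pderiv_mul]
          by_cases hji : j = i
          · subst hji; simp [pderiv_X_self]
          · have : pderiv j (X i : MvPolynomial (Fin m) ℝ) = 0 :=
              pderiv_X_of_ne (Ne.symm hji)
            simp [this, hji]
        simp only [ContinuousLinearMap.add_apply, ContinuousLinearMap.smul_apply,
          projCLM_apply, dotCLM_apply, dotProduct, key, add_mul, ite_mul,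
          zero_mul, Finset.sum_add_distrib, Finset.sum_ite_eq', Finset.mem_univ, if_pos]
        rw [smul_eq_mul, smul_eq_mul, Finset.mul_sum, add_comm]
        congr 1
        exact Finset.sum_congr rfl fun j _ => by ring
      rw [hfun, hder]
      exact h

lemma aeval_eq_eval_map {m : ℕ} (F : MvPolynomial (Fin m) ℚ) (v : Fin m → ℝ) :
    aeval v F = eval v (map (algebraMap ℚ ℝ) F) := by
  rw [aeval_def, eval_map]

lemma grad_eq_s4 {m : ℕ} (F : MvPolynomial (Fin m) ℚ) (v : Fin m → ℝ) (i : Fin m) :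
    grad F v i = eval v (pderiv i (map (algebraMap ℚ ℝ) F)) := by
  rw [grad, aeval_eq_eval_map, pderiv_map]

lemma pderiv_pderiv_comm {R : Type*} [CommSemiring R] {m : ℕ} (i j : Fin m)
    (p : MvPolynomial (Fin m) R) :
    pderiv i (pderiv j p) = pderiv j (pderiv i p) := by
  induction p using MvPolynomial.induction_on' with
  | add p q hp hq => simp [map_add, hp, hq]
  | monomial s a =>
      by_cases hij : i = j
      · subst hij; rfl
      · classical
        simp only [pderiv_monomial]
        have h1 : (s - Finsupp.single j 1 : Fin m →₀ ℕ) i = s i := by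
          simp [Finsupp.sub_apply, Finsupp.single_apply, Ne.symm hij]
        have h2 : (s - Finsupp.single i 1 : Fin m →₀ ℕ) j = s j := by
          simp [Finsupp.sub_apply, Finsupp.single_apply, hij]
        rw [h1, h2]
        have h3 : s - Finsupp.single j 1 - Finsupp.single i 1
            = s - Finsupp.single i 1 - Finsupp.single j 1 := by
          rw [tsub_tsub, tsub_tsub, add_comm]
        rw [h3]
        congr 1
        ring

lemma hessAt_symm {m : ℕ} (F : MvPolynomial (Fin m) ℚ) (v : Fin m → ℝ) (i j : Fin m) :
    hessAt F v i j = hessAt F v j i := by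
  simp only [hessAt, Matrix.of_apply]
  rw [pderiv_pderiv_comm]

lemma grad_pderiv {m : ℕ} (F : MvPolynomial (Fin m) ℚ) (v : Fin m → ℝ) (i j : Fin m) :
    grad (pderiv i F) v j = hessAt F v i j := by
  simp only [grad, hessAt, Matrix.of_apply]
  rw [pderiv_pderiv_comm]

lemma aeval_smul_homog {m k : ℕ} {F : MvPolynomial (Fin m) ℚ} (hF : F.IsHomogeneous k)
    (t : ℝ) (v : Fin m → ℝ) : aeval (t • v) F = t ^ k * aeval v F := by
  have hmap : (map (algebraMap ℚ ℝ) F).IsHomogeneous k := hF.map _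
  rw [aeval_eq_eval_map, aeval_eq_eval_map, eval_eq', eval_eq', Finset.mul_sum]
  apply Finset.sum_congr rfl
  intro d hd
  have hdeg : d.degree = k := by
    by_contra hne
    exact (MvPolynomial.mem_support_iff.mp hd) (hmap.coeff_eq_zero hne)
  have hsum : ∑ i : Fin m, d i = k := by
    rw [← hdeg, Finsupp.degree]
    exact (Finset.sum_subset (Finset.subset_univ _)
      (fun x _ hx => Finsupp.notMem_support_iff.mp hx)).symm
  have : ∏ i : Fin m, (t • v) i ^ d i = t ^ k * ∏ i : Fin m, v i ^ d i := by
    have : ∀ i : Fin m, (t • v) i ^ d i = t ^ d i * v i ^ d i := by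
      intro i; rw [Pi.smul_apply, smul_eq_mul, mul_pow]
    rw [Finset.prod_congr rfl fun i _ => this i, Finset.prod_mul_distrib,
      Finset.prod_pow_eq_pow_sum, hsum]
  rw [this]; ring

lemma rows_surjective {m : ℕ} (M : Matrix (Fin 3) (Fin m) ℝ)
    (h : LinearIndependent ℝ (fun i => M i)) : Function.Surjective M.mulVec := by
  classical
  have hvm : Function.Injective (fun v => v ᵥ* M) := Matrix.vecMul_injective_iff.mpr h
  have hinj : Function.Injective (M * Mᵀ).mulVec := by
    intro x y hxy
    have hz : (M * Mᵀ) *ᵥ (x - y) = 0 := by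
      rw [Matrix.mulVec_sub, hxy, sub_self]
    have h0 : (x - y) ᵥ* M = 0 := by
      have h1 : ((x - y) ᵥ* M) ⬝ᵥ ((x - y) ᵥ* M) = 0 := by
        have : (x - y) ⬝ᵥ ((M * Mᵀ) *ᵥ (x - y)) = 0 := by rw [hz]; simp
        rwa [← Matrix.mulVec_mulVec, Matrix.dotProduct_mulVec,
          Matrix.mulVec_transpose] at this
      exact dotProduct_self_eq_zero.mp h1
    have := hvm (by rw [h0, Matrix.zero_vecMul] : (x - y) ᵥ* M = (0 : Fin 3 → ℝ) ᵥ* M)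
    exact sub_eq_zero.mp this
  have hsurj : Function.Surjective (M * Mᵀ).mulVec :=
    Matrix.mulVec_surjective_iff_isUnit.mpr (Matrix.mulVec_injective_iff_isUnit.mp hinj)
  intro y
  obtain ⟨z, hz⟩ := hsurj y
  exact ⟨Mᵀ *ᵥ z, by rw [Matrix.mulVec_mulVec, hz]⟩

lemma hasStrictFDerivAt_aeval {m : ℕ} (F : MvPolynomial (Fin m) ℚ) (c : Fin m → ℝ) :
    HasStrictFDerivAt (fun v : Fin m → ℝ => aeval v F) (dotCLM (grad F c)) c := by
  have h := hasStrictFDerivAt_evalR c (map (algebraMap ℚ ℝ) F)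
  have hfun : (fun v : Fin m → ℝ => eval v (map (algebraMap ℚ ℝ) F))
      = fun v => aeval v F := by
    funext v; rw [aeval_eq_eval_map]
  have hder : (dotCLM fun i => eval c (pderiv i (map (algebraMap ℚ ℝ) F)))
      = dotCLM (grad F c) := by
    congr 1; funext i; rw [grad_eq_s4]
  rw [hfun, hder] at h
  exact h

section gmap
variable {m : ℕ} (F : MvPolynomial (Fin m) ℚ) (b : Fin m → ℝ)

noncomputable def gmap : (Fin m → ℝ) × (Fin m → ℝ) → (Fin 3 → ℝ) × (Fin m → ℝ) :=
  fun p => (![aeval p.1 F, grad F p.1 ⬝ᵥ p.2, grad F b ⬝ᵥ p.1], p.2)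

noncomputable def Tmap (c d : Fin m → ℝ) :
    ((Fin m → ℝ) × (Fin m → ℝ)) →L[ℝ] (Fin 3 → ℝ) × (Fin m → ℝ) :=
  (ContinuousLinearMap.pi ![
      (dotCLM (grad F c)).comp (ContinuousLinearMap.fst ℝ _ _),
      (dotCLM (d ᵥ* hessAt F c)).comp (ContinuousLinearMap.fst ℝ _ _) +
        (dotCLM (grad F c)).comp (ContinuousLinearMap.snd ℝ _ _),
      (dotCLM (grad F b)).comp (ContinuousLinearMap.fst ℝ _ _)]).prod
    (ContinuousLinearMap.snd ℝ _ _)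

set_option maxHeartbeats 1000000 in
lemma gmap_hasDeriv (c d : Fin m → ℝ) :
    HasStrictFDerivAt (gmap F b) (Tmap F b c d) (c, d) := by
  apply HasStrictFDerivAt.prodMk
  · rw [hasStrictFDerivAt_pi]
    intro i
    fin_cases i
    · show HasStrictFDerivAt (fun p : (Fin m → ℝ) × (Fin m → ℝ) => aeval p.1 F) _ (c, d)
      exact (hasStrictFDerivAt_aeval F c).comp (c, d) (hasStrictFDerivAt_fst (𝕜 := ℝ) (E := Fin m → ℝ) (F := Fin m → ℝ) (p := (c, d)))
    · show HasStrictFDerivAt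
        (fun p : (Fin m → ℝ) × (Fin m → ℝ) => grad F p.1 ⬝ᵥ p.2) _ (c, d)
      have hi : ∀ i : Fin m, HasStrictFDerivAt
          (fun p : (Fin m → ℝ) × (Fin m → ℝ) => aeval p.1 (pderiv i F) * p.2 i)
          (aeval c (pderiv i F) •
              ((projCLM i).comp (ContinuousLinearMap.snd ℝ (Fin m → ℝ) (Fin m → ℝ))) +
            d i • ((dotCLM (grad (pderiv i F) c)).comp
              (ContinuousLinearMap.fst ℝ (Fin m → ℝ) (Fin m → ℝ)))) (c, d) := by
        intro i
        have h := ((hasStrictFDerivAt_aeval (pderiv i F) c).comp (c, d) (hasStrictFDerivAt_fst (𝕜 := ℝ) (E := Fin m → ℝ) (F := Fin m → ℝ) (p := (c, d)))).mul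
          (((projCLM i).comp (ContinuousLinearMap.snd ℝ (Fin m → ℝ) (Fin m → ℝ))).hasStrictFDerivAt)
        exact h
      have h := HasStrictFDerivAt.fun_sum (u := Finset.univ) (fun i _ => hi i)
      have hfun : (fun p : (Fin m → ℝ) × (Fin m → ℝ) => grad F p.1 ⬝ᵥ p.2)
          = fun p => ∑ i, aeval p.1 (pderiv i F) * p.2 i := by
        funext p; simp [grad, dotProduct]
      have hder : (∑ i : Fin m, (aeval c (pderiv i F) •
              ((projCLM i).comp (ContinuousLinearMap.snd ℝ (Fin m → ℝ) (Fin m → ℝ))) +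
            d i • ((dotCLM (grad (pderiv i F) c)).comp
              (ContinuousLinearMap.fst ℝ (Fin m → ℝ) (Fin m → ℝ)))))
          = (dotCLM (d ᵥ* hessAt F c)).comp (ContinuousLinearMap.fst ℝ _ _) +
        (dotCLM (grad F c)).comp (ContinuousLinearMap.snd ℝ _ _) := by
        apply ContinuousLinearMap.ext
        rintro p
        simp only [ContinuousLinearMap.sum_apply, ContinuousLinearMap.add_apply,
          ContinuousLinearMap.smul_apply, ContinuousLinearMap.comp_apply,
          ContinuousLinearMap.coe_fst', ContinuousLinearMap.coe_snd',
          projCLM_apply, dotCLM_apply, smul_eq_mul]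
        rw [Finset.sum_add_distrib, add_comm]
        congr 1
        · -- ∑ i, d i * (grad (pderiv i F) c ⬝ᵥ p.1) = (d ᵥ* hessAt F c) ⬝ᵥ p.1
          have : ∀ i, d i * (grad (pderiv i F) c ⬝ᵥ p.1) = d i * (hessAt F c i ⬝ᵥ p.1) := by
            intro i
            congr 1
            apply Finset.sum_congr rfl
            intro j _
            rw [grad_pderiv]
          rw [Finset.sum_congr rfl fun i _ => this i]
          have : ∑ i, d i * (hessAt F c i ⬝ᵥ p.1) = d ⬝ᵥ (hessAt F c *ᵥ p.1) := rfl
          rw [this]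
          first
          | rfl
          | rw [Matrix.dotProduct_mulVec]
      rw [hfun, ← hder]
      exact h
    · show HasStrictFDerivAt
        (fun p : (Fin m → ℝ) × (Fin m → ℝ) => grad F b ⬝ᵥ p.1) _ (c, d)
      have h := ((dotCLM (grad F b)).comp
        (ContinuousLinearMap.fst ℝ (Fin m → ℝ) (Fin m → ℝ))).hasStrictFDerivAt
        (x := (c, d))
      have hfun : ⇑((dotCLM (grad F b)).comp (ContinuousLinearMap.fst ℝ (Fin m → ℝ) (Fin m → ℝ)))
          = fun p : (Fin m → ℝ) × (Fin m → ℝ) => grad F b ⬝ᵥ p.1 := by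
        funext p
        simp [dotCLM_apply]
      rw [hfun] at h
      exact h
  · exact hasStrictFDerivAt_snd

lemma Tmap_surj (c d : Fin m → ℝ)
    (hli : LinearIndependent ℝ ![grad F c, d ᵥ* hessAt F c, grad F b]) :
    LinearMap.range (Tmap F b c d : ((Fin m → ℝ) × (Fin m → ℝ)) →ₗ[ℝ] (Fin 3 → ℝ) × (Fin m → ℝ)) = ⊤ := by
  rw [LinearMap.range_eq_top]
  rintro ⟨y, z⟩
  set M : Matrix (Fin 3) (Fin m) ℝ := Matrix.of ![grad F c, d ᵥ* hessAt F c, grad F b] with hM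
  have hrows : LinearIndependent ℝ (fun i => M i) := hli
  obtain ⟨w, hw⟩ := rows_surjective M hrows ![y 0, y 1 - grad F c ⬝ᵥ z, y 2]
  refine ⟨(w, z), ?_⟩
  have hmv : ∀ i : Fin 3, M i ⬝ᵥ w = ![y 0, y 1 - grad F c ⬝ᵥ z, y 2] i := by
    intro i
    rw [← congrFun hw i]
    rfl
  refine Prod.ext ?_ rfl
  show (ContinuousLinearMap.pi _) (w, z) = y
  funext i
  rw [ContinuousLinearMap.pi_apply]
  fin_cases i
  · show ((dotCLM (grad F c)).comp
        (ContinuousLinearMap.fst ℝ (Fin m → ℝ) (Fin m → ℝ))) (w, z) = y 0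
    have h0 := hmv 0
    rw [show M 0 = grad F c from rfl,
      show (![y 0, y 1 - grad F c ⬝ᵥ z, y 2] : Fin 3 → ℝ) 0 = y 0 from rfl] at h0
    simpa [dotCLM_apply] using h0
  · show ((dotCLM (d ᵥ* hessAt F c)).comp
        (ContinuousLinearMap.fst ℝ (Fin m → ℝ) (Fin m → ℝ)) +
        (dotCLM (grad F c)).comp
        (ContinuousLinearMap.snd ℝ (Fin m → ℝ) (Fin m → ℝ))) (w, z) = y 1
    have h1 := hmv 1
    rw [show M 1 = d ᵥ* hessAt F c from rfl,
      show (![y 0, y 1 - grad F c ⬝ᵥ z, y 2] : Fin 3 → ℝ) 1 = y 1 - grad F c ⬝ᵥ z from rfl] at h1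
    simp only [ContinuousLinearMap.add_apply, ContinuousLinearMap.comp_apply,
      ContinuousLinearMap.coe_fst', ContinuousLinearMap.coe_snd', dotCLM_apply]
    rw [h1]
    ring
  · show ((dotCLM (grad F b)).comp
        (ContinuousLinearMap.fst ℝ (Fin m → ℝ) (Fin m → ℝ))) (w, z) = y 2
    have h2 := hmv 2
    rw [show M 2 = grad F b from rfl,
      show (![y 0, y 1 - grad F c ⬝ᵥ z, y 2] : Fin 3 → ℝ) 2 = y 2 from rfl] at h2
    simpa [dotCLM_apply] using h2
end gmap

lemma contAeval {m : ℕ} (p : MvPolynomial (Fin m) ℚ) :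
    Continuous fun v : Fin m → ℝ => aeval v p :=
  continuous_iff_continuousAt.mpr fun c => (hasStrictFDerivAt_aeval p c).continuousAt

lemma isOpen_goodSet {m : ℕ} (F : MvPolynomial (Fin m) ℚ) (b : Fin m → ℝ)
    (O : Set (Projectivization ℝ (Fin m → ℝ))) (hO : IsOpen O) :
    IsOpen {v : Fin m → ℝ | ∃ h : v ≠ 0, Projectivization.mk ℝ v h ∈ O} := by
  have hcont : Continuous (fun x : {v : Fin m → ℝ // v ≠ 0} =>
      Projectivization.mk ℝ x.val x.2) := continuous_quotient_mk'
  have heq : {v : Fin m → ℝ | ∃ h : v ≠ 0, Projectivization.mk ℝ v h ∈ O}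
      = Subtype.val '' ((fun x : {v : Fin m → ℝ // v ≠ 0} =>
          Projectivization.mk ℝ x.val x.2) ⁻¹' O) := by
    ext v
    constructor
    · rintro ⟨h, hmem⟩
      exact ⟨⟨v, h⟩, hmem, rfl⟩
    · rintro ⟨⟨w, hw⟩, hmem, rfl⟩
      exact ⟨hw, hmem⟩
  rw [heq]
  exact (isOpen_compl_singleton.isOpenMap_subtype_val) _ (hcont.isOpen_preimage O hO)

lemma eventually_good {m : ℕ} (F : MvPolynomial (Fin m) ℚ) (b : Fin m → ℝ)
    (O : Set (Projectivization ℝ (Fin m → ℝ))) (hO : IsOpen O)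
    (d : Fin m → ℝ) (c' : Fin m → ℝ)
    (h1 : aeval c' F = 0) (h2 : grad F c' ⬝ᵥ d = 0) (h3 : grad F b ⬝ᵥ c' = 0)
    (hli : LinearIndependent ℝ ![grad F c', d ᵥ* hessAt F c', grad F b])
    (hne : c' ≠ 0) (hmem : Projectivization.mk ℝ c' hne ∈ O) :
    ∀ᶠ d' in nhds d, ∃ c'' : Fin m → ℝ,
      (aeval c'' F = 0 ∧ grad F c'' ⬝ᵥ d' = 0 ∧ grad F b ⬝ᵥ c'' = 0) ∧
      LinearIndependent ℝ ![grad F c'', d' ᵥ* hessAt F c'', grad F b] ∧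
      ∃ h : c'' ≠ 0, Projectivization.mk ℝ c'' h ∈ O := by
  classical
  have hmap := (gmap_hasDeriv F b c' d).map_nhds_eq_of_surj (Tmap_surj F b c' d hli)
  have hgpt : gmap F b (c', d) = ((0 : Fin 3 → ℝ), d) := by
    unfold gmap
    refine Prod.ext ?_ rfl
    funext i
    fin_cases i
    · simpa using h1
    · simpa using h2
    · simpa using h3
  set W1 : Set (Fin m → ℝ) := {v | ∃ h : v ≠ 0, Projectivization.mk ℝ v h ∈ O} with hW1def
  have hW1 : IsOpen W1 := isOpen_goodSet F b O hO
  set N : Set ((Fin m → ℝ) × (Fin m → ℝ)) :=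
    (Prod.fst ⁻¹' W1) ∩
      {p | LinearIndependent ℝ ![grad F p.1, p.2 ᵥ* hessAt F p.1, grad F b]} with hNdef
  have hLIcont : Continuous (fun p : (Fin m → ℝ) × (Fin m → ℝ) =>
      (![grad F p.1, p.2 ᵥ* hessAt F p.1, grad F b] : Fin 3 → Fin m → ℝ)) := by
    apply continuous_pi
    intro i
    fin_cases i
    · show Continuous fun p : (Fin m → ℝ) × (Fin m → ℝ) => grad F p.1
      apply continuous_pi
      intro j
      exact (contAeval (pderiv j F)).comp continuous_fst
    · show Continuous fun p : (Fin m → ℝ) × (Fin m → ℝ) => p.2 ᵥ* hessAt F p.1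
      apply continuous_pi
      intro j
      show Continuous fun p : (Fin m → ℝ) × (Fin m → ℝ) => p.2 ⬝ᵥ fun i => hessAt F p.1 i j
      unfold dotProduct
      apply continuous_finset_sum
      intro i _
      exact ((continuous_apply i).comp continuous_snd).mul
        ((contAeval (pderiv i (pderiv j F))).comp continuous_fst)
    · exact continuous_const
  have hNopen : IsOpen N :=
    (hW1.preimage continuous_fst).inter
      (isOpen_setOf_linearIndependent.preimage hLIcont)
  have hNmem : N ∈ nhds (c', d) :=
    hNopen.mem_nhds ⟨⟨hne, hmem⟩, hli⟩
  have himg : gmap F b '' N ∈ nhds ((0 : Fin 3 → ℝ), d) := by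
    rw [← hgpt, ← hmap]
    exact Filter.image_mem_map hNmem
  have hcont0 : Continuous fun d' : Fin m → ℝ => ((0 : Fin 3 → ℝ), d') :=
    continuous_const.prodMk continuous_id
  have hpre : (fun d' : Fin m → ℝ => ((0 : Fin 3 → ℝ), d')) ⁻¹' (gmap F b '' N)
      ∈ nhds d := hcont0.continuousAt.preimage_mem_nhds himg
  filter_upwards [hpre] with d' hd'
  obtain ⟨⟨c'', d₂⟩, hmemN, heq⟩ := hd'
  have hd2 : d₂ = d' := congrArg Prod.snd heq
  subst hd2
  have h0 := congrArg Prod.fst heq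
  have e0 : aeval c'' F = 0 := by
    have := congrFun h0 0
    simpa [gmap] using this
  have e1 : grad F c'' ⬝ᵥ d₂ = 0 := by
    have := congrFun h0 1
    simpa [gmap] using this
  have e2 : grad F b ⬝ᵥ c'' = 0 := by
    have := congrFun h0 2
    simpa [gmap] using this
  obtain ⟨⟨hc0, hcO⟩, hcLI⟩ := hmemN
  exact ⟨c'', ⟨e0, e1, e2⟩, hcLI, hc0, hcO⟩

/-- rep of mk is a scalar multiple -/
lemma rep_mk_smul {m : ℕ} (v : Fin m → ℝ) (h : v ≠ 0) :
    ∃ t : ℝ, t ≠ 0 ∧ (Projectivization.mk ℝ v h).rep = t • v := by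
  obtain ⟨a, ha⟩ := (Projectivization.mk_eq_mk_iff ℝ _ _
    (Projectivization.rep_nonzero _) h).mp
    (Projectivization.mk_rep (Projectivization.mk ℝ v h))
  refine ⟨(a : ℝ), a.ne_zero, ?_⟩
  rw [← ha, Units.smul_def]
/-- if `Y_{B,D′}` has a smooth real point `C′` and `V` is an open
neighbourhood of `C′` in `X(ℝ)`, then for all `D` in some open neighbourhood of `D′`
in `X(ℝ)`, `Y_{B,D}` has a smooth real point in `V`. -/
theorem statement4 (n : ℕ) (hn : 1 ≤ n)
    (F : MvPolynomial (Fin (n + 2)) ℚ) (hF : SmoothCubic F)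
    (B D' : Projectivization ℝ (Fin (n + 2) → ℝ))
    (hB : B ∈ XPts ℝ F) (hD' : D' ∈ XPts ℝ F)
    (c : Fin (n + 2) → ℝ) (hc : YSmoothPt F B.rep D'.rep c)
    (V : Set (Projectivization ℝ (Fin (n + 2) → ℝ))) (hV : IsOpenInX F V)
    (hcV : Projectivization.mk ℝ c hc.1 ∈ V) :
    ∃ U, IsOpenInX F U ∧ D' ∈ U ∧
      ∀ D ∈ U, ∃ (c' : Fin (n + 2) → ℝ) (h : YSmoothPt F B.rep D.rep c'),
        Projectivization.mk ℝ c' h.1 ∈ V := by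
  classical
  obtain ⟨O, hOopen, hVO⟩ := hV
  -- `Good d` : there is a smooth point (with lift d) whose projectivization is in O
  set Good : (Fin (n + 2) → ℝ) → Prop := fun d => ∃ c' : Fin (n + 2) → ℝ,
      (aeval c' F = 0 ∧ grad F c' ⬝ᵥ d = 0 ∧ grad F B.rep ⬝ᵥ c' = 0) ∧
      LinearIndependent ℝ ![grad F c', d ᵥ* hessAt F c', grad F B.rep] ∧
      ∃ h : c' ≠ 0, Projectivization.mk ℝ c' h ∈ O with hGood
  -- scaling invariance of Good
  have hGoodSmul : ∀ (d : Fin (n + 2) → ℝ) (t : ℝ), t ≠ 0 → Good d → Good (t • d) := by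
    rintro d t ht ⟨c', ⟨e0, e1, e2⟩, hli, hne, hmem⟩
    refine ⟨c', ⟨e0, ?_, e2⟩, ?_, hne, hmem⟩
    · rw [dotProduct_smul, e1, smul_zero]
    · have h := hli.units_smul ![1, Units.mk0 t ht, 1]
      have heq : (![1, Units.mk0 t ht, 1] : Fin 3 → ℝˣ) •
          ![grad F c', d ᵥ* hessAt F c', grad F B.rep]
          = ![grad F c', (t • d) ᵥ* hessAt F c', grad F B.rep] := by
        funext i
        fin_cases i
        · show (1 : ℝˣ) • grad F c' = grad F c'; simp
        · show (Units.mk0 t ht : ℝˣ) • (d ᵥ* hessAt F c') = (t • d) ᵥ* hessAt F c'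
          rw [Matrix.smul_vecMul, Units.smul_def]
          rfl
        · show (1 : ℝˣ) • grad F B.rep = grad F B.rep; simp
      rwa [heq] at h
  -- the cone of good directions
  set Wset : Set (Fin (n + 2) → ℝ) := {d | d ≠ 0 ∧ Good d} with hWset
  have hWopen : IsOpen Wset := by
    rw [isOpen_iff_mem_nhds]
    rintro d ⟨hd0, c', ⟨e0, e1, e2⟩, hli, hne, hmem⟩
    have h1 := eventually_good F B.rep O hOopen d c' e0 e1 e2 hli hne hmem
    have h2 : {x : Fin (n + 2) → ℝ | x ≠ 0} ∈ nhds d := compl_singleton_mem_nhds hd0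
    have h2' : ∀ᶠ x in nhds d, x ≠ 0 := h2
    filter_upwards [h1, h2'] with d' hg hn
    exact ⟨hn, hg⟩
  -- the open set downstairs
  set O' : Set (Projectivization ℝ (Fin (n + 2) → ℝ)) := {P | P.rep ∈ Wset} with hO'
  have hWsetIff : ∀ (v : Fin (n + 2) → ℝ) (h : v ≠ 0),
      ((Projectivization.mk ℝ v h).rep ∈ Wset ↔ v ∈ Wset) := by
    intro v h
    obtain ⟨t, ht, hrep⟩ := rep_mk_smul v h
    rw [hrep]
    constructor
    · rintro ⟨-, hgood⟩
      refine ⟨h, ?_⟩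
      have := hGoodSmul _ t⁻¹ (inv_ne_zero ht) hgood
      rwa [smul_smul, inv_mul_cancel₀ ht, one_smul] at this
    · rintro ⟨-, hgood⟩
      exact ⟨smul_ne_zero ht h, hGoodSmul _ t ht hgood⟩
  have hO'open : IsOpen O' := by
    rw [show O' = {P : Projectivization ℝ (Fin (n + 2) → ℝ) | P.rep ∈ Wset} from rfl]
    have hq := (isQuotientMap_quotient_mk'
      (s := projectivizationSetoid ℝ (Fin (n + 2) → ℝ))).isOpen_preimage (s := O')
    refine hq.mp ?_
    have : (@Quotient.mk' _ (projectivizationSetoid ℝ (Fin (n + 2) → ℝ))) ⁻¹' O'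
        = Subtype.val ⁻¹' Wset := by
      ext x
      obtain ⟨v, hv⟩ := x
      show (Projectivization.mk ℝ v hv).rep ∈ Wset ↔ v ∈ Wset
      exact hWsetIff v hv
    rw [this]
    exact hWopen.preimage continuous_subtype_val
  -- the key fact: a good direction yields a smooth point in V
  have hGoodPt : ∀ D : Projectivization ℝ (Fin (n + 2) → ℝ), D.rep ∈ Wset →
      ∃ (c' : Fin (n + 2) → ℝ) (h : YSmoothPt F B.rep D.rep c'),
        Projectivization.mk ℝ c' h.1 ∈ V := by
    rintro D ⟨-, c', ⟨e0, e1, e2⟩, hli, hne, hmem⟩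
    refine ⟨c', ⟨hne, e0, e1, e2, hli⟩, ?_⟩
    rw [hVO]
    refine ⟨hmem, ?_⟩
    show aeval (Projectivization.mk ℝ c' hne).rep F = 0
    obtain ⟨t, ht, hrep⟩ := rep_mk_smul c' hne
    rw [hrep, aeval_smul_homog hF.2.1, e0, mul_zero]
  refine ⟨O' ∩ XPts ℝ F, ⟨O', hO'open, rfl⟩, ⟨?_, hD'⟩, ?_⟩
  · -- D' ∈ O'
    show D'.rep ∈ Wset
    refine ⟨D'.rep_nonzero, c, ⟨hc.2.1, hc.2.2.1, hc.2.2.2.1⟩, hc.2.2.2.2, hc.1, ?_⟩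
    have := hcV
    rw [hVO] at this
    exact this.1
  · rintro D ⟨hD1, -⟩
    exact hGoodPt D hD1
end

section
/- Let B ∈ X(ℝ), C′ ∈ X_B(ℝ) and D′ ∈ X_{C′}(ℝ), with lifts b, c, d ∈ ℝ^{n+2} ∖ {0} respectively. Suppose (i) T_{C′} X ≠ T_B X; (ii) the Hessian matrix H_F(C′) (evaluated at c) is invertible; and (iii) d is not a scalar multiple of (λ∇F(b) + μ∇F(c))·H_F(C′)^{-1} for any (λ, μ) ∈ ℝ² ∖ {(0,0)}. Then C′ is a smooth point of the variety Y_{B,D′}, i.e., the vectors ∇F(c), d·H_F(c) and ∇F(b) are linearly independent over ℝ. -/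
open MvPolynomial Matrix

lemma aevalCoe {m : ℕ} (G : MvPolynomial (Fin m) ℚ) (v : Fin m → ℝ) :
    MvPolynomial.aeval (fun i => ((v i : ℝ) : ℂ)) G = ((MvPolynomial.aeval v G : ℝ) : ℂ) :=
  (MvPolynomial.comp_aeval_apply (f := v) (AlgHom.restrictScalars ℚ Complex.ofRealAm) G).symm

lemma gradNeZero {m : ℕ} (F : MvPolynomial (Fin m) ℚ)
    (hF : ∀ v : Fin m → ℂ, v ≠ 0 → MvPolynomial.aeval v F = 0 → grad F v ≠ 0)
    (v : Fin m → ℝ) (hv : v ≠ 0) (hXv : MvPolynomial.aeval v F = 0) :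
    grad F v ≠ 0 := by
  intro h0
  have hvC : (fun i => ((v i : ℝ) : ℂ)) ≠ 0 := by
    intro hh
    apply hv
    funext i
    have := congrFun hh i
    rw [Pi.zero_apply] at this ⊢
    exact_mod_cast this
  have h1 : MvPolynomial.aeval (fun i => ((v i : ℝ) : ℂ)) F = 0 := by
    rw [aevalCoe, hXv]; simp
  apply hF _ hvC h1
  funext i
  show MvPolynomial.aeval (fun i => ((v i : ℝ) : ℂ)) (MvPolynomial.pderiv i F) = 0
  rw [aevalCoe]
  have : grad F v i = 0 := congrFun h0 i
  rw [show MvPolynomial.aeval v (MvPolynomial.pderiv i F) = 0 from this]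
  simp


/-- smoothness criterion for the point `C′` on `Y_{B,D′}`. -/
theorem statement15 (n : ℕ) (hn : 1 ≤ n)
    (F : MvPolynomial (Fin (n + 2)) ℚ) (hF : SmoothCubic F)
    (b c d : Fin (n + 2) → ℝ) (hb : b ≠ 0) (hc : c ≠ 0) (hd : d ≠ 0)
    (hXb : MvPolynomial.aeval b F = 0) (hXc : MvPolynomial.aeval c F = 0)
    (hXd : MvPolynomial.aeval d F = 0)
    (hcB : grad F b ⬝ᵥ c = 0)  -- `C′ ∈ X_B`
    (hdC : grad F c ⬝ᵥ d = 0)  -- `D′ ∈ X_{C′}`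
    (hi : {x : Fin (n + 2) → ℝ | grad F c ⬝ᵥ x = 0} ≠ {x | grad F b ⬝ᵥ x = 0})
    (hii : IsUnit (hessAt F c))
    (hiii : ∀ lam mu t : ℝ, (lam, mu) ≠ (0, 0) →
      d ≠ t • Matrix.vecMul (lam • grad F b + mu • grad F c) (hessAt F c)⁻¹) :
    LinearIndependent ℝ ![grad F c, Matrix.vecMul d (hessAt F c), grad F b] := by
  obtain ⟨-, -, hsm⟩ := hF
  have hgc : grad F c ≠ 0 := gradNeZero F hsm c hc hXc
  have hgb : grad F b ≠ 0 := gradNeZero F hsm b hb hXb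
  have hdet : IsUnit (hessAt F c).det := (Matrix.isUnit_iff_isUnit_det _).mp hii
  have hrec : ∀ v : Fin (n + 2) → ℝ,
      Matrix.vecMul (Matrix.vecMul v (hessAt F c)) (hessAt F c)⁻¹ = v := by
    intro v
    rw [Matrix.vecMul_vecMul, Matrix.mul_nonsing_inv _ hdet, Matrix.vecMul_one]
  rw [Fintype.linearIndependent_iff]
  intro g hg
  simp only [Fin.sum_univ_three, Matrix.cons_val_zero, Matrix.cons_val_one, Matrix.head_cons,
    Matrix.cons_val_two, Matrix.tail_cons] at hg
  have hg1 : g 1 = 0 := by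
    by_contra h1
    by_cases h20 : g 2 = 0 ∧ g 0 = 0
    · obtain ⟨h2, h0⟩ := h20
      rw [h2, h0] at hg
      simp only [zero_smul, zero_add, add_zero] at hg
      have hdh : Matrix.vecMul d (hessAt F c) = 0 := by
        rcases smul_eq_zero.mp hg with h | h
        · exact absurd h h1
        · exact h
      apply hd
      rw [← hrec d, hdh, Matrix.zero_vecMul]
    · have hne : ((g 2 : ℝ), (g 0 : ℝ)) ≠ (0, 0) := by
        intro hh
        exact h20 ⟨congrArg Prod.fst hh, congrArg Prod.snd hh⟩
      apply hiii (g 2) (g 0) (-(g 1)⁻¹) hne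
      have e1 : Matrix.vecMul d (hessAt F c)
          = (-(g 1)⁻¹) • (g 2 • grad F b + g 0 • grad F c) := by
        funext i
        have hi' := congrFun hg i
        simp only [Pi.add_apply, Pi.smul_apply, Pi.zero_apply, smul_eq_mul] at hi' ⊢
        field_simp
        linarith [hi']
      rw [← hrec d, e1, Matrix.smul_vecMul]
  rw [hg1, zero_smul, add_zero] at hg
  have hg2 : g 2 = 0 := by
    by_contra h2
    have hg0 : g 0 ≠ 0 := by
      intro h0
      rw [h0, zero_smul, zero_add] at hg
      rcases smul_eq_zero.mp hg with h | h
      · exact h2 h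
      · exact hgb h
    apply hi
    have hk : grad F b = (-(g 0) / g 2) • grad F c := by
      funext i
      have hi' := congrFun hg i
      simp only [Pi.add_apply, Pi.smul_apply, Pi.zero_apply, smul_eq_mul] at hi' ⊢
      field_simp
      linarith [hi']
    ext x
    simp only [Set.mem_setOf_eq, hk, smul_dotProduct, smul_eq_mul]
    constructor
    · intro h; rw [h, mul_zero]
    · intro h
      rcases mul_eq_zero.mp h with h' | h'
      · exact absurd h' (div_ne_zero (neg_ne_zero.mpr hg0) h2)
      · exact h'
  rw [hg2, zero_smul, add_zero] at hg
  have hg0 : g 0 = 0 := by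
    rcases smul_eq_zero.mp hg with h | h
    · exact h
    · exact absurd h hgc
  intro i
  fin_cases i <;> assumption
end
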